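/- Let K be an ordered field and H a nontrivial convex subgroup of the additive group of K. Then the set O = {a ∈ K : aH ⊆ H} is a convex subring of K which is neither {0} nor all of K, and O is a valuation ring of K: for every nonzero a ∈ K, either a ∈ O or a^{-1} ∈ O. -/

import Mathlib

/-- If `H` is a nontrivial convex additive subgroup of an ordered
field `K`, then `O = {a : K | aH ⊆ H}` is a convex subring of `K`, neither `{0}`
nor `K`, and `O` is a valuation ring: for nonzero `a`, `a ∈ O` or `a⁻¹ ∈ O`. -/
theorem stabilizer_convex_valuation_subring {K : Type*} [Field K] [LinearOrder K] [IsStrictOrderedRing K]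
    (H : AddSubgroup K)
    (hconv : ∀ a b c : K, a ∈ H → b ∈ H → a ≤ c → c ≤ b → c ∈ H)
    (hbot : H ≠ ⊥) (htop : H ≠ ⊤) :
    ∃ O : Subring K, (O : Set K) = {a : K | ∀ h ∈ H, a * h ∈ H} ∧
      (∀ a b c : K, a ∈ O → b ∈ O → a ≤ c → c ≤ b → c ∈ O) ∧
      (O : Set K) ≠ {0} ∧ O ≠ ⊤ ∧
      ∀ a : K, a ≠ 0 → a ∈ O ∨ a⁻¹ ∈ O := by
  have habs : ∀ h : K, h ∈ H → |h| ∈ H := by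
    intro h hh
    rcases abs_cases h with ⟨e, _⟩ | ⟨e, _⟩
    · rw [e]; exact hh
    · rw [e]; exact H.neg_mem hh
  have hsmall : ∀ a : K, |a| ≤ 1 → ∀ h ∈ H, a * h ∈ H := by
    intro a ha h hh
    have h1 : |a * h| ≤ |h| := by
      rw [abs_mul]
      calc |a| * |h| ≤ 1 * |h| := by
            exact mul_le_mul_of_nonneg_right ha (abs_nonneg _)
        _ = |h| := one_mul _
    exact hconv (-|h|) |h| (a * h) (H.neg_mem (habs h hh)) (habs h hh)
      (neg_le_of_abs_le h1) (le_of_abs_le h1)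
  refine ⟨{
    carrier := {a : K | ∀ h ∈ H, a * h ∈ H}
    one_mem' := by intro h hh; simpa using hh
    mul_mem' := by
      intro a b ha hb h hh
      rw [mul_assoc]; exact ha _ (hb h hh)
    zero_mem' := by intro h hh; simpa using H.zero_mem
    add_mem' := by
      intro a b ha hb h hh
      rw [add_mul]; exact H.add_mem (ha h hh) (hb h hh)
    neg_mem' := by
      intro a ha h hh
      rw [neg_mul]; exact H.neg_mem (ha h hh) }, rfl, ?_, ?_, ?_, ?_⟩
  · intro a b c ha hb hab hcb h hh
    rcases le_or_gt 0 h with h0 | h0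
    · exact hconv (a * h) (b * h) (c * h) (ha h hh) (hb h hh)
        (mul_le_mul_of_nonneg_right hab h0) (mul_le_mul_of_nonneg_right hcb h0)
    · exact hconv (b * h) (a * h) (c * h) (hb h hh) (ha h hh)
        (mul_le_mul_of_nonpos_right hcb h0.le) (mul_le_mul_of_nonpos_right hab h0.le)
  · intro heq
    have h1 : (1 : K) ∈ ({a : K | ∀ h ∈ H, a * h ∈ H} : Set K) := by
      intro h hh; simpa using hh
    rw [show ({a : K | ∀ h ∈ H, a * h ∈ H} : Set K) = {0} from heq ▸ rfl] at h1
    simp at h1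
  · intro htop'
    obtain ⟨h₀, h₀H, h₀ne⟩ : ∃ h₀ ∈ H, h₀ ≠ 0 := by
      by_contra hc
      push_neg at hc
      exact hbot (by ext x; simp [AddSubgroup.mem_bot]; exact ⟨fun hx => hc x hx, fun e => e ▸ H.zero_mem⟩)
    obtain ⟨x, hx⟩ : ∃ x : K, x ∉ H := by
      by_contra hc
      push_neg at hc
      exact htop (by ext y; simp [hc])
    have : (x / h₀) ∈ ({a : K | ∀ h ∈ H, a * h ∈ H} : Set K) := by
      have := htop' ▸ (Subring.mem_top (x / h₀))
      exact this
    have := this h₀ h₀H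
    rw [div_mul_cancel₀ x h₀ne] at this
    exact hx this
  · intro a ha
    rcases le_or_gt (|a|) 1 with h1 | h1
    · exact Or.inl (hsmall a h1)
    · right
      apply hsmall
      rw [abs_inv]
      rw [inv_le_one_iff₀]
      right; exact h1.le
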